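/- Let S, I : [0, ∞) → ℝ be differentiable functions solving the planar SIR system with S(0) > 0 and I(0) > 0. Then for all t ≥ 0, S(t) + I(t) ≤ max(S(0) + I(0), A/μ); in particular the solution is bounded and no trajectory starting in the open positive quadrant escapes to infinity in forward time. -/

import Mathlib

/-- For a solution of the planar SIR system with `S(0) > 0`, `I(0) > 0`,
we have `S(t) + I(t) ≤ max(S(0) + I(0), A/μ)` for all `t ≥ 0`; in particular the solution is
bounded and no forward trajectory from the open positive quadrant escapes to infinity. -/
theorem sir_boundedness (A β μ q : ℝ)
    (hA : 0 < A) (hβ : 0 < β) (hμ : 0 < μ) (hq : 0 < q)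
    (S I : ℝ → ℝ)
    (hS : ∀ t ≥ (0 : ℝ), HasDerivAt S (A - β * S t * I t - μ * S t) t)
    (hI : ∀ t ≥ (0 : ℝ), HasDerivAt I (β * S t * I t - (q + μ) * I t) t)
    (hS0 : 0 < S 0) (hI0 : 0 < I 0) :
    ∀ t ≥ (0 : ℝ), S t + I t ≤ max (S 0 + I 0) (A / μ) := by
  -- continuity of S and I on [0,∞)
  have hScont : ∀ t ≥ (0:ℝ), ContinuousAt S t := fun t ht => (hS t ht).continuousAt
  have hIcont : ∀ t ≥ (0:ℝ), ContinuousAt I t := fun t ht => (hI t ht).continuousAt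
  -- a globally continuous version of β S - (q+μ)
  set c : ℝ → ℝ := fun u => β * S (max u 0) - (q + μ) with hc
  have hccont : Continuous c := by
    rw [continuous_iff_continuousAt]
    intro u
    have hmax : ContinuousAt (fun v : ℝ => max v 0) u :=
      (continuous_id.max continuous_const).continuousAt
    have hSc : ContinuousAt S (max u 0) := hScont _ (le_max_right _ _)
    have h2 : ContinuousAt (fun v : ℝ => S (max v 0)) u := ContinuousAt.comp hSc hmax
    exact (continuousAt_const.mul h2).sub continuousAt_const
  set C : ℝ → ℝ := fun t => ∫ u in (0:ℝ)..t, c u with hCdef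
  have hC : ∀ t : ℝ, HasDerivAt C (c t) t := by
    intro t
    apply intervalIntegral.integral_hasDerivAt_right
    · exact (hccont.continuousOn).intervalIntegrable
    · exact hccont.stronglyMeasurableAtFilter _ _
    · exact hccont.continuousAt
  -- g = I * exp(-C) is constant, hence I > 0 on [0,∞)
  have hIpos : ∀ t ≥ (0:ℝ), 0 < I t := by
    intro t ht
    set g : ℝ → ℝ := fun u => I u * Real.exp (-C u) with hgdef
    have hg : ∀ u ≥ (0:ℝ), HasDerivAt g 0 u := by
      intro u hu
      have hexp : HasDerivAt (fun v => Real.exp (-C v))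
          (Real.exp (-C u) * (-(c u))) u :=
        by have := (Real.hasDerivAt_exp (-C u)).comp u ((hC u).neg); exact this
      have : HasDerivAt g _ u := (hI u hu).mul hexp
      convert this using 1
      simp only [hc, max_eq_left hu]
      ring
    have hgconst : g t = g 0 := by
      have := constant_of_has_deriv_right_zero (f := g) (a := (0:ℝ)) (b := t)
        (fun u hu => ((hIcont u hu.1).mul
          ((Real.continuous_exp.continuousAt).comp
            ((hC u).continuousAt.neg))).continuousWithinAt)
        (fun u hu => (hg u hu.1).hasDerivWithinAt)
      exact this t ⟨ht, le_rfl⟩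
    have hC0 : C 0 = 0 := by simp [hCdef]
    have hg0 : g 0 = I 0 := by simp [hgdef, hC0]
    have hpos : 0 < I t * Real.exp (-C t) := by
      have : I t * Real.exp (-C t) = I 0 := by
        rw [← hg0, ← hgconst]
      rw [this]; exact hI0
    nlinarith [Real.exp_pos (-C t)]
  -- main comparison: f = (S + I - A/μ) * exp(μ t) is nonincreasing
  intro t ht
  set f : ℝ → ℝ := fun u => (S u + I u - A / μ) * Real.exp (μ * u) with hfdef
  have hf : ∀ u ≥ (0:ℝ), HasDerivAt f (-(q * I u) * Real.exp (μ * u)) u := by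
    intro u hu
    have hlin : HasDerivAt (fun v : ℝ => μ * v) μ u := by
      simpa using (hasDerivAt_id u).const_mul μ
    have hexp : HasDerivAt (fun v => Real.exp (μ * v)) (Real.exp (μ * u) * μ) u :=
      (Real.hasDerivAt_exp (μ * u)).comp u hlin
    have hsum : HasDerivAt (fun v => S v + I v - A / μ)
        ((A - β * S u * I u - μ * S u) + (β * S u * I u - (q + μ) * I u)) u :=
      ((hS u hu).add (hI u hu)).sub_const _
    have : HasDerivAt f _ u := hsum.mul hexp
    convert this using 1
    field_simp
    ring
  have hmono : f t ≤ f 0 := by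
    rcases eq_or_lt_of_le ht with heq | htpos
    · rw [← heq]
    have hanti : AntitoneOn f (Set.Icc 0 t) := by
      apply antitoneOn_of_deriv_nonpos (convex_Icc 0 t)
      · intro u hu
        exact ((((hScont u hu.1).add (hIcont u hu.1)).sub continuousAt_const).mul
          ((Real.continuous_exp.continuousAt).comp
            (continuousAt_id.const_mul μ))).continuousWithinAt
      · intro u hu
        rw [interior_Icc] at hu
        exact ((hf u hu.1.le).differentiableAt).differentiableWithinAt
      · intro u hu
        rw [interior_Icc] at hu
        rw [(hf u hu.1.le).deriv]
        have hI' := (hIpos u hu.1.le).le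
        have hE := (Real.exp_pos (μ * u)).le
        nlinarith [mul_nonneg (mul_nonneg hq.le hI') hE]
    exact hanti ⟨le_rfl, ht⟩ ⟨ht, le_rfl⟩ ht
  have hf0 : f 0 = S 0 + I 0 - A / μ := by simp [hfdef]
  rw [hf0] at hmono
  have hE1 : (1:ℝ) ≤ Real.exp (μ * t) := by
    rw [Real.one_le_exp_iff]
    positivity
  have hmax1 : S 0 + I 0 ≤ max (S 0 + I 0) (A / μ) := le_max_left _ _
  have hmax2 : A / μ ≤ max (S 0 + I 0) (A / μ) := le_max_right _ _
  by_contra h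
  push_neg at h
  simp only [hfdef] at hmono
  nlinarith
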